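/- Let x ∈ L be a non-torsion element with normal form x = a_1 e_1 + ⋯ + a_n e_n + a c. Set I := {1 ≤ i ≤ n : a_i ≠ 0}, and for i ∈ I set d_i := gcd(a_i, p_i) and p'_i := p_i/d_i (so p'_i ≥ 2 and gcd(p'_i, a_i/d_i) = 1). Let L' := L((p'_i)_{i∈I}) with generators e'_i and common value c' of the p'_i e'_i, let S' := ℂ[t_0,t_1,(x'_i)_{i∈I}]/((x'_i)^{p'_i} − ℓ_i(t_0,t_1) : i ∈ I) with its L'-grading, and set x' := ∑_{i∈I} (a_i/d_i) e'_i + a c' ∈ L'. Then there is an isomorphism of ℤ-graded ℂ-algebras S^x ≅ (S')^{x'}. -/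

import Mathlib

set_option synthInstance.maxHeartbeats 1000000
set_option maxHeartbeats 1000000
noncomputable section

open MvPolynomial

def LRel (ι : Type) [DecidableEq ι] (p : ι → ℕ) : AddSubgroup (Option ι → ℤ) :=
  AddSubgroup.closure
    { v | ∃ i : ι, v = (p i : ℤ) • Pi.single (some i) 1 - Pi.single (none : Option ι) 1 }

abbrev LGroup (ι : Type) [DecidableEq ι] (p : ι → ℕ) : Type :=
  (Option ι → ℤ) ⧸ LRel ι p

def egen {ι : Type} [DecidableEq ι] (p : ι → ℕ) (i : ι) : LGroup ι p :=
  QuotientAddGroup.mk (Pi.single (some i) 1)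

def cgen {ι : Type} [DecidableEq ι] (p : ι → ℕ) : LGroup ι p :=
  QuotientAddGroup.mk (Pi.single (none : Option ι) 1)

def Lplus {ι : Type} [DecidableEq ι] (p : ι → ℕ) : AddSubmonoid (LGroup ι p) :=
  AddSubmonoid.closure (Set.range (egen p))

abbrev SPoly (ι : Type) : Type := MvPolynomial (ι ⊕ Fin 2) ℂ

def SIdl (ι : Type) (p : ι → ℕ) (c0 c1 : ι → ℂ) : Ideal (SPoly ι) :=
  Ideal.span { f | ∃ i : ι,
    f = X (Sum.inl i) ^ (p i) - (C (c0 i) * X (Sum.inr 0) + C (c1 i) * X (Sum.inr 1)) }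

abbrev SAlg (ι : Type) (p : ι → ℕ) (c0 c1 : ι → ℂ) : Type := SPoly ι ⧸ SIdl ι p c0 c1

def wtA {ι : Type} [Fintype ι] [DecidableEq ι] (p : ι → ℕ) (m : (ι ⊕ Fin 2) →₀ ℕ) :
    LGroup ι p :=
  (∑ i : ι, m (Sum.inl i) • egen p i) + (m (Sum.inr 0) + m (Sum.inr 1)) • cgen p

def polyCompA {ι : Type} [Fintype ι] [DecidableEq ι] (p : ι → ℕ) (y : LGroup ι p) :
    Submodule ℂ (SPoly ι) where
  carrier := { f | ∀ m, coeff m f ≠ 0 → wtA p m = y }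
  add_mem' := by
    intro f g hf hg m hm
    by_cases h : coeff m f = 0
    · refine hg m fun h' => hm ?_
      simp [coeff_add, h, h']
    · exact hf m h
  zero_mem' := by
    intro m hm
    simp at hm
  smul_mem' := by
    intro c f hf m hm
    refine hf m fun h => hm ?_
    simp [coeff_smul, h]

def SCompA {ι : Type} [Fintype ι] [DecidableEq ι] (p : ι → ℕ) (c0 c1 : ι → ℂ)
    (y : LGroup ι p) : Submodule ℂ (SAlg ι p c0 c1) :=
  (polyCompA p y).map (Ideal.Quotient.mkₐ ℂ (SIdl ι p c0 c1)).toLinearMap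

def SVerA {ι : Type} [Fintype ι] [DecidableEq ι] (p : ι → ℕ) (c0 c1 : ι → ℂ)
    (x : LGroup ι p) : Submodule ℂ (SAlg ι p c0 c1) :=
  ⨆ k : ℤ, SCompA p c0 c1 (k • x)

def SShiftA {ι : Type} [Fintype ι] [DecidableEq ι] (p : ι → ℕ) (c0 c1 : ι → ℂ)
    (y x : LGroup ι p) : Submodule ℂ (SAlg ι p c0 c1) :=
  ⨆ k : ℤ, SCompA p c0 c1 (y + k • x)

/-- Restriction of the weight data `p` to the subset `I`, dividing by `d`. -/
def pRes {n : ℕ} (p d : Fin n → ℕ) (I : Finset (Fin n)) : ↥I → ℕ :=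
  fun i => p i.1 / d i.1

/-- Restriction of a family of scalars to the subset `I`. -/
def cRes {n : ℕ} (c : Fin n → ℂ) (I : Finset (Fin n)) : ↥I → ℂ :=
  fun i => c i.1


section Group
set_option linter.unusedSectionVars false
variable {ι : Type} [Fintype ι] [DecidableEq ι] (p : ι → ℕ)

/-- The homomorphism parametrizing `LRel`. -/
def relHom : (ι → ℤ) →+ (Option ι → ℤ) where
  toFun q := fun o => Option.elim o (-∑ i, q i) (fun i => p i * q i)
  map_zero' := by funext o; cases o <;> simp
  map_add' u v := by
    funext o; cases o <;>
      simp [Finset.sum_add_distrib, mul_add, neg_add, add_comm]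

lemma relHom_single (i : ι) :
    relHom p (Pi.single i 1) =
      (p i : ℤ) • Pi.single (some i) 1 - Pi.single (none : Option ι) 1 := by
  funext o
  cases o with
  | none => simp [relHom]
  | some j =>
    by_cases h : j = i
    · subst h; simp [relHom, Pi.single_apply]
    · simp [relHom, Pi.single_apply, Ne.symm h, h]

lemma relHom_eq_sum (q : ι → ℤ) :
    relHom p q = ∑ i, q i • ((p i : ℤ) • Pi.single (some i) 1
      - Pi.single (none : Option ι) 1) := by
  funext o
  cases o with
  | none => simp [relHom, Finset.sum_apply, Pi.single_apply]
  | some j =>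
    simp only [relHom, AddMonoidHom.coe_mk, ZeroHom.coe_mk, Option.elim,
      Finset.sum_apply, Pi.smul_apply, Pi.sub_apply, Pi.single_apply, smul_eq_mul]
    rw [Finset.sum_eq_single j]
    · simp [mul_comm]
    · intro b _ hb; simp [Ne.symm hb]
    · intro h; exact absurd (Finset.mem_univ j) h

lemma LRel_eq_range : LRel ι p = (relHom p).range := by
  apply le_antisymm
  · rw [LRel, AddSubgroup.closure_le]
    rintro v ⟨i, rfl⟩
    exact AddMonoidHom.mem_range.mpr ⟨Pi.single i 1, relHom_single p i⟩
  · rintro v ⟨q, rfl⟩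
    rw [relHom_eq_sum]
    exact AddSubgroup.sum_mem _ fun i _ => AddSubgroup.zsmul_mem _
      (AddSubgroup.subset_closure (Set.mem_setOf.mpr ⟨i, rfl⟩)) _

lemma mem_LRel {v : Option ι → ℤ} :
    v ∈ LRel ι p ↔ ∃ q : ι → ℤ, (∀ i, v (some i) = p i * q i) ∧ v none + ∑ i, q i = 0 := by
  rw [LRel_eq_range]
  constructor
  · rintro ⟨q, rfl⟩
    exact ⟨q, fun i => rfl, by simp [relHom]⟩
  · rintro ⟨q, h1, h2⟩
    refine ⟨q, ?_⟩
    funext o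
    cases o with
    | none =>
      show -∑ i, q i = v none
      linarith [h2]
    | some i => exact (h1 i).symm

end Group
section Group2
variable {ι : Type} [Fintype ι] [DecidableEq ι] (p : ι → ℕ)

lemma mk_combo (b : ι → ℕ) (z : ℤ) :
    (∑ i, b i • egen p i) + z • cgen p =
      QuotientAddGroup.mk (fun o => Option.elim o z (fun i => (b i : ℤ))) := by
  have he : ∀ i, b i • egen p i =
      QuotientAddGroup.mk' (LRel ι p) (b i • Pi.single (some i) (1:ℤ)) := by
    intro i; rw [map_nsmul]; rfl
  have hc : z • cgen p =
      QuotientAddGroup.mk' (LRel ι p) (z • Pi.single (none : Option ι) (1:ℤ)) := by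
    rw [map_zsmul]; rfl
  simp only [he, hc, ← map_sum, ← map_add]
  exact congrArg (QuotientAddGroup.mk' (LRel ι p)) (by
    funext o
    cases o with
    | none => simp [Finset.sum_apply, Pi.single_apply]
    | some j =>
      simp only [Pi.add_apply, Finset.sum_apply, Pi.smul_apply, Pi.single_apply,
        smul_eq_mul, Option.elim]
      rw [Finset.sum_eq_single j]
      · simp
      · intro b' _ hb'; simp [Pi.single_apply, Ne.symm hb']
      · intro h; exact absurd (Finset.mem_univ j) h)

lemma wtA_eq_mk (m : (ι ⊕ Fin 2) →₀ ℕ) :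
    wtA p m = QuotientAddGroup.mk
      (fun o => Option.elim o ((m (Sum.inr 0) : ℤ) + m (Sum.inr 1))
        (fun i => (m (Sum.inl i) : ℤ))) := by
  rw [wtA, ← mk_combo]
  congr 1

lemma wtA_eq_k_iff (m : (ι ⊕ Fin 2) →₀ ℕ) (aN : ι → ℕ) (aZ k : ℤ) :
    wtA p m = k • ((∑ i, aN i • egen p i) + aZ • cgen p) ↔
      ∃ q : ι → ℤ, (∀ i, k * aN i - m (Sum.inl i) = p i * q i) ∧
        (k * aZ - ((m (Sum.inr 0) : ℤ) + m (Sum.inr 1))) + ∑ i, q i = 0 := by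
  rw [wtA_eq_mk, mk_combo]
  have : k • (QuotientAddGroup.mk (fun o => Option.elim o aZ (fun i => (aN i : ℤ))) :
      LGroup ι p) = QuotientAddGroup.mk (k • fun o => Option.elim o aZ (fun i => (aN i : ℤ))) := rfl
  rw [this, QuotientAddGroup.eq, mem_LRel]
  constructor
  · rintro ⟨q, h1, h2⟩
    refine ⟨q, fun i => ?_, ?_⟩
    · have := h1 i
      simp only [Pi.add_apply, Pi.neg_apply, Pi.smul_apply, smul_eq_mul, Option.elim] at this
      linear_combination this
    · simp only [Pi.add_apply, Pi.neg_apply, Pi.smul_apply, smul_eq_mul, Option.elim] at h2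
      linear_combination h2
  · rintro ⟨q, h1, h2⟩
    refine ⟨q, fun i => ?_, ?_⟩
    · simp only [Pi.add_apply, Pi.neg_apply, Pi.smul_apply, smul_eq_mul, Option.elim]
      linear_combination h1 i
    · simp only [Pi.add_apply, Pi.neg_apply, Pi.smul_apply, smul_eq_mul, Option.elim]
      linear_combination h2

end Group2
section NF
set_option linter.unusedSectionVars false
variable {ι : Type} [Fintype ι] [DecidableEq ι] (p : ι → ℕ) (c0 c1 : ι → ℂ)

/-- The linear form `ℓᵢ`. -/
def lform (i : ι) : SPoly ι := C (c0 i) * X (Sum.inr 0) + C (c1 i) * X (Sum.inr 1)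

/-- Generator of the ideal. -/
def sgen (i : ι) : SPoly ι := X (Sum.inl i) ^ (p i) - lform c0 c1 i

lemma sgen_mem : sgen p c0 c1 i ∈ SIdl ι p c0 c1 :=
  Ideal.subset_span ⟨i, rfl⟩

/-- Exponent reduction: reduce all `inl` exponents mod `p`. -/
def redE (m : (ι ⊕ Fin 2) →₀ ℕ) : (ι ⊕ Fin 2) →₀ ℕ :=
  Finsupp.equivFunOnFinite.symm fun j =>
    Sum.elim (fun i => m (Sum.inl i) % p i) (fun j => m (Sum.inr j)) j

@[simp] lemma redE_inl (m) (i : ι) : redE p m (Sum.inl i) = m (Sum.inl i) % p i := rfl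
@[simp] lemma redE_inr (m) (j : Fin 2) : redE p m (Sum.inr j) = m (Sum.inr j) := rfl

/-- Normal form of a monomial. -/
def NmonB (m : (ι ⊕ Fin 2) →₀ ℕ) : SPoly ι :=
  (∏ i, lform c0 c1 i ^ (m (Sum.inl i) / p i)) * monomial (redE p m) 1

/-- The normal-form linear map. -/
def Nmap : SPoly ι →ₗ[ℂ] SPoly ι :=
  (Finsupp.lsum ℂ fun m => LinearMap.toSpanSingleton ℂ (SPoly ι) (NmonB p c0 c1 m)) ∘ₗ
    (AddMonoidAlgebra.coeffLinearEquiv ℂ : SPoly ι ≃ₗ[ℂ] _).toLinearMap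

lemma Nmap_monomial (m) (c : ℂ) :
    Nmap p c0 c1 (monomial m c) = c • NmonB p c0 c1 m := by
  have : (AddMonoidAlgebra.coeffLinearEquiv ℂ : SPoly ι ≃ₗ[ℂ] _) (monomial m c : SPoly ι)
      = Finsupp.single m c := rfl
  rw [Nmap, LinearMap.comp_apply, LinearEquiv.coe_coe, this]
  erw [Finsupp.lsum_single]
  rw [LinearMap.toSpanSingleton_apply]

end NF
section NF2
set_option linter.unusedSectionVars false
variable {ι : Type} [Fintype ι] [DecidableEq ι] (p : ι → ℕ) (c0 c1 : ι → ℂ)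

lemma monomial_eq_prod (m : (ι ⊕ Fin 2) →₀ ℕ) (c : ℂ) :
    (monomial m c : SPoly ι) = C c * ((∏ i : ι, X (Sum.inl i) ^ m (Sum.inl i)) *
      (X (Sum.inr 0) ^ m (Sum.inr 0) * X (Sum.inr 1) ^ m (Sum.inr 1))) := by
  rw [monomial_eq]
  congr 1
  rw [Finsupp.prod_fintype _ _ (fun j => pow_zero _), Fintype.prod_sum_type]
  congr 1
  exact Fin.prod_univ_two _

lemma mk_X_pow_p (i : ι) :
    Ideal.Quotient.mk (SIdl ι p c0 c1) (X (Sum.inl i) ^ (p i)) =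
      Ideal.Quotient.mk (SIdl ι p c0 c1) (lform c0 c1 i) :=
  Ideal.Quotient.eq.mpr (sgen_mem p c0 c1)

lemma mk_X_pow (i : ι) (k : ℕ) :
    Ideal.Quotient.mk (SIdl ι p c0 c1) (X (Sum.inl i) ^ k) =
      Ideal.Quotient.mk (SIdl ι p c0 c1)
        (lform c0 c1 i ^ (k / p i) * X (Sum.inl i) ^ (k % p i)) := by
  conv_lhs => rw [← Nat.div_add_mod k (p i)]
  rw [pow_add, pow_mul, map_mul, map_mul, map_pow, mk_X_pow_p, ← map_pow]

lemma mk_NmonB (m : (ι ⊕ Fin 2) →₀ ℕ) :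
    Ideal.Quotient.mk (SIdl ι p c0 c1) (NmonB p c0 c1 m) =
      Ideal.Quotient.mk (SIdl ι p c0 c1) (monomial m 1) := by
  rw [NmonB, monomial_eq_prod, monomial_eq_prod]
  simp only [map_mul, map_prod, map_pow, map_one, C_1, one_mul, redE_inl, redE_inr]
  rw [← mul_assoc]
  rw [← Finset.prod_mul_distrib]
  congr 1
  apply Finset.prod_congr rfl
  intro i _
  rw [← map_pow, ← map_pow, ← map_mul, ← mk_X_pow, map_pow]

lemma mk_Nmap (f : SPoly ι) :
    Ideal.Quotient.mk (SIdl ι p c0 c1) (Nmap p c0 c1 f) =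
      Ideal.Quotient.mk (SIdl ι p c0 c1) f := by
  induction f using MvPolynomial.induction_on' with
  | monomial m c =>
    rw [Nmap_monomial, smul_eq_C_mul, map_mul, mk_NmonB, ← map_mul, C_mul_monomial, mul_one]
  | add f g hf hg => rw [map_add, map_add, hf, hg, map_add]

end NF2
section NF3
set_option linter.unusedSectionVars false
variable {ι : Type} [Fintype ι] [DecidableEq ι] (p : ι → ℕ) (c0 c1 : ι → ℂ)

lemma redE_add_p (m : (ι ⊕ Fin 2) →₀ ℕ) (i : ι) :
    redE p (m + Finsupp.single (Sum.inl i) (p i)) = redE p m := by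
  ext j
  cases j with
  | inl i' =>
    rw [redE_inl, redE_inl, Finsupp.add_apply, Finsupp.single_apply]
    by_cases h : i = i'
    · subst h; simp [Nat.add_mod_right]
    · simp [h]
  | inr j => simp [Finsupp.single_apply]

lemma NmonB_add_p (i : ι) (hp : 0 < p i) (m : (ι ⊕ Fin 2) →₀ ℕ) :
    NmonB p c0 c1 (m + Finsupp.single (Sum.inl i) (p i)) =
      lform c0 c1 i * NmonB p c0 c1 m := by
  rw [NmonB, NmonB, redE_add_p, ← mul_assoc]
  congr 1
  have hq : ∀ i', (m + Finsupp.single (Sum.inl i) (p i) : (ι ⊕ Fin 2) →₀ ℕ) (Sum.inl i') / p i'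
      = m (Sum.inl i') / p i' + (if i' = i then 1 else 0) := by
    intro i'
    rw [show (m + Finsupp.single (Sum.inl i) (p i) : (ι ⊕ Fin 2) →₀ ℕ) (Sum.inl i')
        = m (Sum.inl i') + (Finsupp.single (Sum.inl i) (p i) : (ι ⊕ Fin 2) →₀ ℕ) (Sum.inl i')
      from Finsupp.add_apply _ _ _, Finsupp.single_apply]
    by_cases h : i' = i
    · subst h; simp [Nat.add_div_right _ hp]
    · rw [if_neg (fun hh => h (Sum.inl.inj hh).symm), add_zero, if_neg h, add_zero]
  simp only [hq, pow_add]
  rw [Finset.prod_mul_distrib]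
  have : ∀ i', lform c0 c1 i' ^ (if i' = i then 1 else 0)
      = if i' = i then lform c0 c1 i' else 1 := by
    intro i'; split <;> simp
  simp only [this]
  rw [Finset.prod_ite_eq' Finset.univ i (lform c0 c1), if_pos (Finset.mem_univ i), mul_comm]

lemma redE_add_t (m : (ι ⊕ Fin 2) →₀ ℕ) (j : Fin 2) :
    redE p (m + Finsupp.single (Sum.inr j) 1) = redE p m + Finsupp.single (Sum.inr j) 1 := by
  ext u
  cases u with
  | inl i' => simp [Finsupp.single_apply]
  | inr j' => simp [Finsupp.single_apply]

lemma NmonB_add_t (m : (ι ⊕ Fin 2) →₀ ℕ) (j : Fin 2) :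
    NmonB p c0 c1 (m + Finsupp.single (Sum.inr j) 1) =
      X (Sum.inr j) * NmonB p c0 c1 m := by
  rw [NmonB, NmonB, redE_add_t]
  have h1 : ∀ i', (m + Finsupp.single (Sum.inr j) 1 : (ι ⊕ Fin 2) →₀ ℕ) (Sum.inl i') = m (Sum.inl i') := by
    intro i'; simp [Finsupp.single_apply]
  simp only [h1]
  have h2 : (monomial (redE p m + Finsupp.single (Sum.inr j) 1) (1:ℂ) : SPoly ι)
      = X (Sum.inr j) * monomial (redE p m) 1 := by
    have hX : (X (Sum.inr j) : SPoly ι) = monomial (Finsupp.single (Sum.inr j) 1) 1 := by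
      rw [← X_pow_eq_monomial, pow_one]
    rw [hX, monomial_mul, one_mul, add_comm]
  rw [h2]; ring

lemma NmonB_of_red (m : (ι ⊕ Fin 2) →₀ ℕ) (hm : ∀ i, m (Sum.inl i) < p i) :
    NmonB p c0 c1 m = monomial m 1 := by
  rw [NmonB]
  have h1 : ∀ i, m (Sum.inl i) / p i = 0 := fun i => Nat.div_eq_of_lt (hm i)
  have h2 : redE p m = m := by
    ext u
    cases u with
    | inl i => rw [redE_inl]; exact Nat.mod_eq_of_lt (hm i)
    | inr j => rw [redE_inr]
  simp [h1, h2]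

end NF3
section NF4
set_option linter.unusedSectionVars false
variable {ι : Type} [Fintype ι] [DecidableEq ι] (p : ι → ℕ) (c0 c1 : ι → ℂ)

lemma monomial_mul_CX (m : (ι ⊕ Fin 2) →₀ ℕ) (c a : ℂ) (j : Fin 2) :
    (monomial m c : SPoly ι) * (C a * X (Sum.inr j)) =
      monomial (m + Finsupp.single (Sum.inr j) 1) (c * a) := by
  have hX : (X (Sum.inr j) : SPoly ι) = monomial (Finsupp.single (Sum.inr j) 1) 1 := by
    rw [← X_pow_eq_monomial, pow_one]
  rw [hX, C_mul_monomial, mul_one, monomial_mul]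

lemma Nmap_monomial_mul_sgen (hp : ∀ i, 0 < p i) (m : (ι ⊕ Fin 2) →₀ ℕ) (c : ℂ) (i : ι) :
    Nmap p c0 c1 (monomial m c * sgen p c0 c1 i) = 0 := by
  rw [sgen, mul_sub, lform, mul_add]
  have h1 : (monomial m c : SPoly ι) * X (Sum.inl i) ^ p i =
      monomial (m + Finsupp.single (Sum.inl i) (p i)) c := by
    rw [X_pow_eq_monomial, monomial_mul, mul_one]
  rw [h1, monomial_mul_CX, monomial_mul_CX, map_sub, map_add,
    Nmap_monomial, Nmap_monomial, Nmap_monomial,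
    NmonB_add_p p c0 c1 i (hp i), NmonB_add_t, NmonB_add_t]
  simp only [smul_eq_C_mul, lform, map_mul]
  ring

lemma Nmap_mul_sgen (hp : ∀ i, 0 < p i) (t : SPoly ι) (i : ι) :
    Nmap p c0 c1 (t * sgen p c0 c1 i) = 0 := by
  induction t using MvPolynomial.induction_on' with
  | monomial m c => exact Nmap_monomial_mul_sgen p c0 c1 hp m c i
  | add f g hf hg => rw [add_mul, map_add, hf, hg, add_zero]

lemma Nmap_ideal (hp : ∀ i, 0 < p i) {f : SPoly ι} (hf : f ∈ SIdl ι p c0 c1) :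
    Nmap p c0 c1 f = 0 := by
  have key : ∀ g ∈ SIdl ι p c0 c1, ∀ t : SPoly ι, Nmap p c0 c1 (t * g) = 0 := by
    intro g hg
    induction hg using Submodule.span_induction with
    | mem g hg =>
      obtain ⟨i, rfl⟩ := hg
      intro t
      exact Nmap_mul_sgen p c0 c1 hp t i
    | zero => intro t; rw [mul_zero, map_zero]
    | add f g _ _ hf hg => intro t; rw [mul_add, map_add, hf t, hg t, add_zero]
    | smul r f _ hf => intro t; rw [smul_eq_mul, ← mul_assoc, hf]
  have := key f hf 1
  rwa [one_mul] at this

lemma mk_eq_iff_Nmap_eq (hp : ∀ i, 0 < p i) (f g : SPoly ι) :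
    Ideal.Quotient.mk (SIdl ι p c0 c1) f = Ideal.Quotient.mk (SIdl ι p c0 c1) g ↔
      Nmap p c0 c1 f = Nmap p c0 c1 g := by
  constructor
  · intro h
    have hsub : f - g ∈ SIdl ι p c0 c1 := Ideal.Quotient.eq.mp h
    have := Nmap_ideal p c0 c1 hp hsub
    rw [map_sub, sub_eq_zero] at this
    exact this
  · intro h
    rw [← mk_Nmap p c0 c1 f, ← mk_Nmap p c0 c1 g, h]

end NF4
section NF5
set_option linter.unusedSectionVars false
variable {ι : Type} [Fintype ι] [DecidableEq ι] (p : ι → ℕ) (c0 c1 : ι → ℂ)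

/-- `f` only involves the `t`-variables, homogeneously of degree `k`. -/
def tHomog (f : SPoly ι) (k : ℕ) : Prop :=
  ∀ u : (ι ⊕ Fin 2) →₀ ℕ, coeff u f ≠ 0 →
    (∀ i, u (Sum.inl i) = 0) ∧ u (Sum.inr 0) + u (Sum.inr 1) = k

lemma tHomog_one : tHomog (1 : SPoly ι) 0 := by
  intro u hu
  have : u = 0 := by
    by_contra h
    exact hu (by rw [coeff_one, if_neg (fun hh => h hh.symm)])
  subst this
  simp

lemma tHomog_mul {f g : SPoly ι} {k l : ℕ} (hf : tHomog f k) (hg : tHomog g l) :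
    tHomog (f * g) (k + l) := by
  intro u hu
  rw [coeff_mul] at hu
  obtain ⟨⟨v, w⟩, hvw, hterm⟩ := Finset.exists_ne_zero_of_sum_ne_zero hu
  rw [Finset.HasAntidiagonal.mem_antidiagonal] at hvw
  have h1 := hf v (fun h => hterm (by simp [h]))
  have h2 := hg w (fun h => hterm (by simp [h]))
  subst hvw
  constructor
  · intro i; simp [h1.1 i, h2.1 i]
  · simp only [Finsupp.add_apply]
    omega

lemma tHomog_pow {f : SPoly ι} {k : ℕ} (hf : tHomog f k) (n : ℕ) :
    tHomog (f ^ n) (n * k) := by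
  induction n with
  | zero => simpa using tHomog_one
  | succ n ih =>
    rw [pow_succ, Nat.succ_mul]
    exact tHomog_mul ih hf

lemma tHomog_lform (i : ι) : tHomog (lform c0 c1 i) 1 := by
  intro u hu
  have h0 : (C (c0 i) * X (Sum.inr 0) : SPoly ι)
      = monomial (Finsupp.single (Sum.inr 0) 1) (c0 i) := by
    rw [show (X (Sum.inr 0) : SPoly ι) = monomial (Finsupp.single (Sum.inr 0) 1) 1 from
      by rw [← X_pow_eq_monomial, pow_one], C_mul_monomial, mul_one]
  have h1 : (C (c1 i) * X (Sum.inr 1) : SPoly ι)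
      = monomial (Finsupp.single (Sum.inr 1) 1) (c1 i) := by
    rw [show (X (Sum.inr 1) : SPoly ι) = monomial (Finsupp.single (Sum.inr 1) 1) 1 from
      by rw [← X_pow_eq_monomial, pow_one], C_mul_monomial, mul_one]
  rw [lform, h0, h1, coeff_add, coeff_monomial, coeff_monomial] at hu
  have : u = Finsupp.single (Sum.inr 0) 1 ∨ u = Finsupp.single (Sum.inr 1) 1 := by
    by_contra h
    push_neg at h
    rw [if_neg (fun hh => h.1 hh.symm), if_neg (fun hh => h.2 hh.symm)] at hu
    exact hu (by ring)
  rcases this with h | h <;> subst h <;>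
    exact ⟨fun i => by simp [Finsupp.single_apply], by simp [Finsupp.single_apply]⟩

lemma tHomog_prod_lform (s : Finset ι) (q : ι → ℕ) :
    tHomog (∏ i ∈ s, lform c0 c1 i ^ q i) (∑ i ∈ s, q i) := by
  induction s using Finset.cons_induction with
  | empty => simpa using tHomog_one
  | cons i s hi ih =>
    rw [Finset.prod_cons, Finset.sum_cons]
    have := tHomog_mul (f := lform c0 c1 i ^ q i) (g := ∏ i ∈ s, lform c0 c1 i ^ q i)
      (by simpa using tHomog_pow (tHomog_lform c0 c1 i) (q i)) ih
    exact this

lemma NmonB_coeff {m u : (ι ⊕ Fin 2) →₀ ℕ} (hu : coeff u (NmonB p c0 c1 m) ≠ 0) :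
    (∀ i, u (Sum.inl i) = m (Sum.inl i) % p i) ∧
      u (Sum.inr 0) + u (Sum.inr 1) =
        (∑ i, m (Sum.inl i) / p i) + (m (Sum.inr 0) + m (Sum.inr 1)) := by
  rw [NmonB, coeff_mul] at hu
  obtain ⟨⟨v, w⟩, hvw, hterm⟩ := Finset.exists_ne_zero_of_sum_ne_zero hu
  rw [Finset.HasAntidiagonal.mem_antidiagonal] at hvw
  have h1 := tHomog_prod_lform c0 c1 Finset.univ (fun i => m (Sum.inl i) / p i) v
    (fun h => hterm (by simp [h]))
  have h2 : w = redE p m := by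
    by_contra h
    rw [coeff_monomial, if_neg (fun hh => h hh.symm)] at hterm
    exact hterm (by ring)
  subst h2 hvw
  constructor
  · intro i
    simp [h1.1 i]
  · have hb : v (Sum.inr 0) + v (Sum.inr 1) = ∑ i, m (Sum.inl i) / p i := by
      simpa using h1.2
    simp only [Finsupp.add_apply, redE_inr]
    omega

lemma NmonB_wt (m u : (ι ⊕ Fin 2) →₀ ℕ) (hu : coeff u (NmonB p c0 c1 m) ≠ 0) :
    wtA p u = wtA p m := by
  obtain ⟨h1, h2⟩ := NmonB_coeff p c0 c1 hu
  have hb : u (Sum.inr 0) + u (Sum.inr 1) =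
      (∑ i, m (Sum.inl i) / p i) + (m (Sum.inr 0) + m (Sum.inr 1)) := h2
  rw [wtA_eq_mk, wtA_eq_mk, QuotientAddGroup.eq, mem_LRel]
  refine ⟨fun i => ((m (Sum.inl i) / p i : ℕ) : ℤ), fun i => ?_, ?_⟩
  · simp only [Pi.add_apply, Pi.neg_apply, Option.elim]
    rw [h1 i]
    have hdm : (↑(p i * (m (Sum.inl i) / p i) + m (Sum.inl i) % p i) : ℤ)
        = ↑(m (Sum.inl i)) := by rw [Nat.div_add_mod]
    rw [Nat.cast_add, Nat.cast_mul] at hdm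
    linarith [hdm]
  · simp only [Pi.add_apply, Pi.neg_apply, Option.elim]
    rw [show (∑ i, ((m (Sum.inl i) / p i : ℕ) : ℤ))
        = ((∑ i, m (Sum.inl i) / p i : ℕ) : ℤ) from (Nat.cast_sum _ _).symm]
    omega

end NF5
section NF6
set_option linter.unusedSectionVars false
variable {ι : Type} [Fintype ι] [DecidableEq ι] (p : ι → ℕ) (c0 c1 : ι → ℂ)

/-- The submodule of reduced polynomials. -/
def RedSub : Submodule ℂ (SPoly ι) where
  carrier := { f | ∀ u, coeff u f ≠ 0 → ∀ i, u (Sum.inl i) < p i }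
  add_mem' := by
    intro f g hf hg u hu
    by_cases h : coeff u f = 0
    · refine hg u fun h' => hu ?_
      simp [coeff_add, h, h']
    · exact hf u h
  zero_mem' := by intro u hu; simp at hu
  smul_mem' := by
    intro c f hf u hu
    refine hf u fun h => hu ?_
    simp [coeff_smul, h]

lemma Nmap_as_sum (f : SPoly ι) :
    Nmap p c0 c1 f = ∑ m ∈ f.support, coeff m f • NmonB p c0 c1 m := by
  conv_lhs => rw [f.as_sum]
  rw [map_sum]
  exact Finset.sum_congr rfl fun m _ => Nmap_monomial p c0 c1 m _

lemma Nmap_mem_polyComp {y : LGroup ι p} {f : SPoly ι} (hf : f ∈ polyCompA p y) :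
    Nmap p c0 c1 f ∈ polyCompA p y := by
  rw [Nmap_as_sum]
  refine Submodule.sum_mem _ fun m hm => Submodule.smul_mem _ _ ?_
  intro u hu
  rw [NmonB_wt p c0 c1 m u hu]
  exact hf m (mem_support_iff.mp hm)

lemma Nmap_mem_red (hp : ∀ i, 0 < p i) (f : SPoly ι) :
    Nmap p c0 c1 f ∈ RedSub p := by
  rw [Nmap_as_sum]
  refine Submodule.sum_mem _ fun m hm => Submodule.smul_mem _ _ ?_
  intro u hu i
  rw [(NmonB_coeff p c0 c1 hu).1 i]
  exact Nat.mod_lt _ (hp i)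

lemma Nmap_of_red {f : SPoly ι} (hf : f ∈ RedSub p) : Nmap p c0 c1 f = f := by
  rw [Nmap_as_sum]
  conv_rhs => rw [f.as_sum]
  refine Finset.sum_congr rfl fun m hm => ?_
  rw [NmonB_of_red p c0 c1 m (hf m (mem_support_iff.mp hm)), smul_eq_C_mul,
    C_mul_monomial, mul_one]

/-- Membership in a Veronese component in terms of a reduced representative. -/
lemma mem_SCompA_iff (hp : ∀ i, 0 < p i) (y : LGroup ι p) (w : SAlg ι p c0 c1) :
    w ∈ SCompA p c0 c1 y ↔ ∃ f : SPoly ι, f ∈ polyCompA p y ∧ f ∈ RedSub p ∧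
      Ideal.Quotient.mk (SIdl ι p c0 c1) f = w := by
  constructor
  · rintro ⟨g, hg, rfl⟩
    exact ⟨Nmap p c0 c1 g, Nmap_mem_polyComp p c0 c1 hg, Nmap_mem_red p c0 c1 hp g,
      mk_Nmap p c0 c1 g⟩
  · rintro ⟨f, hf, _, rfl⟩
    exact ⟨f, hf, rfl⟩

end NF6
section Transfer
set_option linter.unusedSectionVars false
variable {n : ℕ} (p : Fin n → ℕ) (a : Fin n → ℕ) (I : Finset (Fin n))

/-- Scale exponents up: from the small ring to the big ring. -/
def Dexp (m' : (↥I ⊕ Fin 2) →₀ ℕ) : (Fin n ⊕ Fin 2) →₀ ℕ :=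
  Finsupp.equivFunOnFinite.symm fun j =>
    Sum.elim (fun i : Fin n => if h : i ∈ I then
        Nat.gcd (a i) (p i) * m' (Sum.inl ⟨i, h⟩) else 0)
      (fun j : Fin 2 => m' (Sum.inr j)) j

/-- Scale exponents down. -/
def Eexp (m : (Fin n ⊕ Fin 2) →₀ ℕ) : (↥I ⊕ Fin 2) →₀ ℕ :=
  Finsupp.equivFunOnFinite.symm fun j =>
    Sum.elim (fun i : ↥I => m (Sum.inl i.1) / Nat.gcd (a i.1) (p i.1))
      (fun j : Fin 2 => m (Sum.inr j)) j

@[simp] lemma Dexp_inr (m') (j : Fin 2) : Dexp p a I m' (Sum.inr j) = m' (Sum.inr j) := rfl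

lemma Dexp_inl_mem (m') (i : ↥I) :
    Dexp p a I m' (Sum.inl i.1) = Nat.gcd (a i.1) (p i.1) * m' (Sum.inl i) := by
  show (if h : i.1 ∈ I then Nat.gcd (a i.1) (p i.1) * m' (Sum.inl ⟨i.1, h⟩) else 0) = _
  rw [dif_pos i.2]

lemma Dexp_inl_not (m') {i : Fin n} (h : i ∉ I) : Dexp p a I m' (Sum.inl i) = 0 := by
  show (if h : i ∈ I then _ else 0) = 0
  rw [dif_neg h]

@[simp] lemma Eexp_inr (m) (j : Fin 2) : Eexp p a I m (Sum.inr j) = m (Sum.inr j) := rfl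

@[simp] lemma Eexp_inl (m) (i : ↥I) :
    Eexp p a I m (Sum.inl i) = m (Sum.inl i.1) / Nat.gcd (a i.1) (p i.1) := rfl

lemma Eexp_Dexp (hp : ∀ i, 0 < p i) (m') : Eexp p a I (Dexp p a I m') = m' := by
  ext j
  cases j with
  | inl i =>
    rw [Eexp_inl, Dexp_inl_mem]
    exact Nat.mul_div_cancel_left _ (Nat.gcd_pos_of_pos_right _ (hp i.1))
  | inr j => rw [Eexp_inr, Dexp_inr]

lemma Dexp_injective (hp : ∀ i, 0 < p i) : Function.Injective (Dexp p a I) :=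
  Function.LeftInverse.injective (Eexp_Dexp p a I hp)

/-- Helper: sums of dite over the subtype. -/
lemma sum_dite_subtype (f : ↥I → ℤ) :
    ∑ i : Fin n, (if h : i ∈ I then f ⟨i, h⟩ else 0) = ∑ i : ↥I, f i := by
  rw [← Finset.sum_subset (Finset.subset_univ I)
    (fun x _ hx => dif_neg hx)]
  rw [← Finset.sum_coe_sort I (fun i => if h : i ∈ I then f ⟨i, h⟩ else 0)]
  exact Finset.sum_congr rfl fun i _ => dif_pos i.2

end Transfer
section Transfer2
set_option linter.unusedSectionVars false
variable {n : ℕ} (p : Fin n → ℕ) (a : Fin n → ℕ) (I : Finset (Fin n))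

lemma cast_gcd_adiv (i : Fin n) :
    ((Nat.gcd (a i) (p i) : ℤ)) * ((a i / Nat.gcd (a i) (p i) : ℕ) : ℤ) = (a i : ℤ) := by
  rw [← Nat.cast_mul, Nat.mul_div_cancel' (Nat.gcd_dvd_left _ _)]

lemma cast_gcd_pdiv (i : Fin n) :
    ((Nat.gcd (a i) (p i) : ℤ)) * ((p i / Nat.gcd (a i) (p i) : ℕ) : ℤ) = (p i : ℤ) := by
  rw [← Nat.cast_mul, Nat.mul_div_cancel' (Nat.gcd_dvd_right _ _)]

lemma gcd_ne_zero (hp : ∀ i, 0 < p i) (i : Fin n) :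
    ((Nat.gcd (a i) (p i) : ℤ)) ≠ 0 := by
  have := Nat.gcd_pos_of_pos_right (a i) (hp i)
  exact_mod_cast this.ne'

/-- Transfer (push): a weight condition on the small side gives one on the big side. -/
lemma wt_push (hp : ∀ i, 0 < p i) (hI : ∀ i, i ∈ I ↔ a i ≠ 0) (aZ k : ℤ)
    (m' : (↥I ⊕ Fin 2) →₀ ℕ)
    (h : wtA (pRes p (fun i => Nat.gcd (a i) (p i)) I) m' =
      k • ((∑ i : ↥I, (a i.1 / Nat.gcd (a i.1) (p i.1)) •
          egen (pRes p (fun i => Nat.gcd (a i) (p i)) I) i) +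
        aZ • cgen (pRes p (fun i => Nat.gcd (a i) (p i)) I))) :
    wtA p (Dexp p a I m') = k • ((∑ i, a i • egen p i) + aZ • cgen p) := by
  rw [wtA_eq_k_iff] at h ⊢
  obtain ⟨q', h1', h2'⟩ := h
  refine ⟨fun i => if h : i ∈ I then q' ⟨i, h⟩ else 0, fun i => ?_, ?_⟩
  · show _ = (p i : ℤ) * (if h : i ∈ I then q' ⟨i, h⟩ else 0)
    by_cases h : i ∈ I
    · rw [dif_pos h]
      rw [show (Sum.inl i : Fin n ⊕ Fin 2) = Sum.inl ((⟨i, h⟩ : ↥I) : Fin n) from rfl,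
        Dexp_inl_mem]
      have h1 := h1' ⟨i, h⟩
      have hda := cast_gcd_adiv p a i
      have hdp := cast_gcd_pdiv p a i
      simp only [pRes] at h1
      rw [Nat.cast_mul]
      linear_combination (Nat.gcd (a i) (p i) : ℤ) * h1 - k * hda + q' ⟨i, h⟩ * hdp
    · rw [dif_neg h, Dexp_inl_not p a I m' h]
      have ha0 : a i = 0 := by
        by_contra hne
        exact h ((hI i).mpr hne)
      simp [ha0]
  · rw [sum_dite_subtype, Dexp_inr, Dexp_inr]
    exact h2'

/-- Transfer (pull along `Dexp`). -/
lemma wt_pull_D (hp : ∀ i, 0 < p i) (hI : ∀ i, i ∈ I ↔ a i ≠ 0) (aZ k : ℤ)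
    (m' : (↥I ⊕ Fin 2) →₀ ℕ)
    (h : wtA p (Dexp p a I m') = k • ((∑ i, a i • egen p i) + aZ • cgen p)) :
    wtA (pRes p (fun i => Nat.gcd (a i) (p i)) I) m' =
      k • ((∑ i : ↥I, (a i.1 / Nat.gcd (a i.1) (p i.1)) •
          egen (pRes p (fun i => Nat.gcd (a i) (p i)) I) i) +
        aZ • cgen (pRes p (fun i => Nat.gcd (a i) (p i)) I)) := by
  rw [wtA_eq_k_iff] at h ⊢
  obtain ⟨q, h1, h2⟩ := h
  refine ⟨fun i => q i.1, fun i => ?_, ?_⟩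
  · have h1i := h1 i.1
    rw [Dexp_inl_mem] at h1i
    have hda := cast_gcd_adiv p a i.1
    have hdp := cast_gcd_pdiv p a i.1
    rw [Nat.cast_mul] at h1i
    apply mul_left_cancel₀ (gcd_ne_zero p a hp i.1)
    simp only [pRes]
    linear_combination h1i + k * hda - q i.1 * hdp
  · have hq0 : ∀ i, i ∉ I → q i = 0 := by
      intro i hi
      have ha0 : a i = 0 := by
        by_contra hne; exact hi ((hI i).mpr hne)
      have h1i := h1 i
      rw [Dexp_inl_not p a I m' hi, ha0] at h1i
      simp only [Nat.cast_zero, mul_zero, sub_zero] at h1i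
      have := h1i.symm
      rcases mul_eq_zero.mp this with h' | h'
      · exact absurd h' (by exact_mod_cast (hp i).ne')
      · exact h'
    have hsum : ∑ i, q i = ∑ i : ↥I, q i.1 := by
      rw [← sum_dite_subtype I (fun i => q i.1)]
      refine Finset.sum_congr rfl fun i _ => ?_
      by_cases h : i ∈ I
      · rw [dif_pos h]
      · rw [dif_neg h, hq0 i h]
    rw [hsum] at h2
    simpa using h2

/-- Pull for a reduced exponent vector on the big side. -/
lemma wt_pull_red (hp : ∀ i, 0 < p i) (hI : ∀ i, i ∈ I ↔ a i ≠ 0) (aZ k : ℤ)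
    (m : (Fin n ⊕ Fin 2) →₀ ℕ) (hred : ∀ i, m (Sum.inl i) < p i)
    (h : wtA p m = k • ((∑ i, a i • egen p i) + aZ • cgen p)) :
    Dexp p a I (Eexp p a I m) = m ∧
      (∀ i : ↥I, Eexp p a I m (Sum.inl i) < pRes p (fun i => Nat.gcd (a i) (p i)) I i) := by
  rw [wtA_eq_k_iff] at h
  obtain ⟨q, h1, h2⟩ := h
  have hz : ∀ i, i ∉ I → m (Sum.inl i) = 0 := by
    intro i hi
    have ha0 : a i = 0 := by by_contra hne; exact hi ((hI i).mpr hne)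
    have h1i := h1 i
    rw [ha0] at h1i
    simp only [Nat.cast_zero, mul_zero, zero_sub] at h1i
    have hdvd : (p i : ℤ) ∣ (m (Sum.inl i) : ℤ) := ⟨-q i, by linarith⟩
    have : p i ∣ m (Sum.inl i) := Int.ofNat_dvd.mp hdvd
    exact Nat.eq_zero_of_dvd_of_lt this (hred i)
  have hq0 : ∀ i, i ∉ I → q i = 0 := by
    intro i hi
    have ha0 : a i = 0 := by by_contra hne; exact hi ((hI i).mpr hne)
    have h1i := h1 i
    rw [ha0, hz i hi] at h1i
    simp only [Nat.cast_zero, mul_zero, sub_zero, zero_sub, neg_eq_iff_eq_neg,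
      Nat.cast_zero] at h1i
    have : (0:ℤ) = p i * q i := by simpa using h1i
    rcases mul_eq_zero.mp this.symm with h' | h'
    · exact absurd h' (by exact_mod_cast (hp i).ne')
    · exact h'
  have hdvd : ∀ i (h : i ∈ I), Nat.gcd (a i) (p i) ∣ m (Sum.inl i) := by
    intro i hmem
    have h1i := h1 i
    have hzd : ((Nat.gcd (a i) (p i) : ℤ)) ∣ (m (Sum.inl i) : ℤ) := by
      have hd1 : ((Nat.gcd (a i) (p i) : ℤ)) ∣ (a i : ℤ) :=
        Int.ofNat_dvd.mpr (Nat.gcd_dvd_left _ _)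
      have hd2 : ((Nat.gcd (a i) (p i) : ℤ)) ∣ (p i : ℤ) :=
        Int.ofNat_dvd.mpr (Nat.gcd_dvd_right _ _)
      have : (m (Sum.inl i) : ℤ) = k * a i - p i * q i := by linarith [h1i]
      rw [this]
      exact dvd_sub (Dvd.dvd.mul_left hd1 k) (Dvd.dvd.mul_right hd2 (q i))
    exact Int.ofNat_dvd.mp hzd
  constructor
  · ext j
    cases j with
    | inl i =>
      by_cases hmem : i ∈ I
      · rw [show (Sum.inl i : Fin n ⊕ Fin 2) = Sum.inl ((⟨i, hmem⟩ : ↥I) : Fin n) from rfl,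
          Dexp_inl_mem, Eexp_inl]
        exact Nat.mul_div_cancel' (hdvd i hmem)
      · rw [Dexp_inl_not p a I _ hmem, hz i hmem]
    | inr j => rw [Dexp_inr, Eexp_inr]
  · intro i
    rw [Eexp_inl]
    simp only [pRes]
    have hdm := Nat.mul_div_cancel' (hdvd i.1 i.2)
    have hdp := Nat.mul_div_cancel' (Nat.gcd_dvd_right (a i.1) (p i.1))
    apply Nat.lt_of_mul_lt_mul_left (a := Nat.gcd (a i.1) (p i.1))
    rw [hdm, hdp]
    exact hred i.1

end Transfer2
section Psi
set_option linter.unusedSectionVars false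
variable {n : ℕ} (p : Fin n → ℕ) (c0 c1 : Fin n → ℂ) (a : Fin n → ℕ) (I : Finset (Fin n))

lemma prod_dite_subtype {M : Type*} [CommMonoid M] (f : ↥I → M) :
    ∏ i : Fin n, (if h : i ∈ I then f ⟨i, h⟩ else 1) = ∏ i : ↥I, f i := by
  rw [← Finset.prod_subset (Finset.subset_univ I) (fun x _ hx => dif_neg hx),
    ← Finset.prod_coe_sort I (fun i => if h : i ∈ I then f ⟨i, h⟩ else 1)]
  exact Finset.prod_congr rfl fun i _ => dif_pos i.2

/-- The algebra map on polynomial rings sending `x'ᵢ ↦ xᵢ^{dᵢ}`. -/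
def bigPsi : SPoly ↥I →ₐ[ℂ] SPoly (Fin n) :=
  aeval fun j => Sum.elim
    (fun i : ↥I => X (Sum.inl i.1) ^ Nat.gcd (a i.1) (p i.1))
    (fun j : Fin 2 => X (Sum.inr j)) j

lemma bigPsi_monomial (m' : (↥I ⊕ Fin 2) →₀ ℕ) (c : ℂ) :
    bigPsi p a I (monomial m' c) = monomial (Dexp p a I m') c := by
  rw [bigPsi, aeval_monomial, monomial_eq_prod, algebraMap_eq]
  rw [Finsupp.prod_fintype _ _ (fun j => pow_zero _), Fintype.prod_sum_type]
  congr 1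
  congr 1
  · have : ∀ i : Fin n, (X (Sum.inl i) : SPoly (Fin n)) ^ (Dexp p a I m' (Sum.inl i)) =
        (if h : i ∈ I then (X (Sum.inl i) ^ (Nat.gcd (a i) (p i))) ^ m' (Sum.inl ⟨i, h⟩)
          else 1) := by
      intro i
      by_cases h : i ∈ I
      · rw [dif_pos h, ← pow_mul,
          show (Sum.inl i : Fin n ⊕ Fin 2) = Sum.inl ((⟨i, h⟩ : ↥I) : Fin n) from rfl,
          Dexp_inl_mem]
      · rw [dif_neg h, Dexp_inl_not p a I m' h, pow_zero]
    rw [Finset.prod_congr rfl fun i _ => this i]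
    exact (prod_dite_subtype I _).symm
  · rw [Fin.prod_univ_two]
    rfl

lemma bigPsi_as_sum (f' : SPoly ↥I) :
    bigPsi p a I f' = ∑ m ∈ f'.support, monomial (Dexp p a I m) (coeff m f') := by
  conv_lhs => rw [f'.as_sum]
  rw [map_sum]
  exact Finset.sum_congr rfl fun m _ => bigPsi_monomial p a I m _

lemma coeff_bigPsi_D (hp : ∀ i, 0 < p i) (f' : SPoly ↥I) (m₀ : (↥I ⊕ Fin 2) →₀ ℕ) :
    coeff (Dexp p a I m₀) (bigPsi p a I f') = coeff m₀ f' := by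
  rw [bigPsi_as_sum]
  rw [show ((∑ m ∈ f'.support, monomial (Dexp p a I m) (coeff m f')).coeff (Dexp p a I m₀))
    = ∑ m ∈ f'.support, coeff (Dexp p a I m₀) (monomial (Dexp p a I m) (coeff m f'))
    from coeff_sum _ _ _]
  by_cases h : m₀ ∈ f'.support
  · rw [Finset.sum_eq_single m₀]
    · rw [coeff_monomial, if_pos rfl]
    · intro m _ hm
      rw [coeff_monomial, if_neg (fun hh => hm (Dexp_injective p a I hp hh))]
    · intro h'; exact absurd h h'
  · rw [Finset.sum_eq_zero, ← MvPolynomial.notMem_support_iff.mp h]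
    intro m hm
    rw [coeff_monomial, if_neg]
    intro hh
    exact h ((Dexp_injective p a I hp hh) ▸ hm)

lemma coeff_bigPsi_ne (f' : SPoly ↥I) (u : (Fin n ⊕ Fin 2) →₀ ℕ)
    (hu : coeff u (bigPsi p a I f') ≠ 0) :
    ∃ m, coeff m f' ≠ 0 ∧ u = Dexp p a I m := by
  rw [bigPsi_as_sum, show ((∑ m ∈ f'.support, monomial (Dexp p a I m) (coeff m f')).coeff u)
    = ∑ m ∈ f'.support, coeff u (monomial (Dexp p a I m) (coeff m f'))
    from coeff_sum _ _ _] at hu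
  obtain ⟨m, hm, hne⟩ := Finset.exists_ne_zero_of_sum_ne_zero hu
  refine ⟨m, mem_support_iff.mp hm, ?_⟩
  rw [coeff_monomial] at hne
  by_contra h
  exact hne (if_neg (fun hh => h hh.symm))

end Psi
section Psi2
set_option linter.unusedSectionVars false
variable {n : ℕ} (p : Fin n → ℕ) (c0 c1 : Fin n → ℂ) (a : Fin n → ℕ) (I : Finset (Fin n))

lemma pRes_pos (hp : ∀ i, 0 < p i) (i : ↥I) :
    0 < pRes p (fun i => Nat.gcd (a i) (p i)) I i :=
  Nat.div_pos (Nat.le_of_dvd (hp i.1) (Nat.gcd_dvd_right _ _))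
    (Nat.gcd_pos_of_pos_right _ (hp i.1))

lemma bigPsi_gen (i : ↥I) :
    bigPsi p a I (X (Sum.inl i) ^ (pRes p (fun i => Nat.gcd (a i) (p i)) I i) -
      (C (cRes c0 I i) * X (Sum.inr 0) + C (cRes c1 I i) * X (Sum.inr 1))) =
    sgen p c0 c1 i.1 := by
  have hX : bigPsi p a I (X (Sum.inl i)) = X (Sum.inl i.1) ^ Nat.gcd (a i.1) (p i.1) := by
    rw [bigPsi, aeval_X]; rfl
  have hX0 : bigPsi p a I (X (Sum.inr 0)) = X (Sum.inr 0) := by rw [bigPsi, aeval_X]; rfl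
  have hX1 : bigPsi p a I (X (Sum.inr 1)) = X (Sum.inr 1) := by rw [bigPsi, aeval_X]; rfl
  have hC : ∀ c : ℂ, bigPsi p a I (C c) = C c := by
    intro c; rw [show (C c : SPoly ↥I) = algebraMap ℂ _ c from rfl, AlgHom.commutes]
    rfl
  rw [map_sub, map_pow, map_add, map_mul, map_mul, hX, hX0, hX1, hC, hC, ← pow_mul]
  rw [show Nat.gcd (a i.1) (p i.1) * pRes p (fun i => Nat.gcd (a i) (p i)) I i = p i.1 from
    Nat.mul_div_cancel' (Nat.gcd_dvd_right _ _)]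
  rfl

/-- The induced map on quotient algebras. -/
def bigpsi : SAlg ↥I (pRes p (fun i => Nat.gcd (a i) (p i)) I) (cRes c0 I) (cRes c1 I)
    →ₐ[ℂ] SAlg (Fin n) p c0 c1 :=
  Ideal.Quotient.liftₐ _
    ((Ideal.Quotient.mkₐ ℂ (SIdl (Fin n) p c0 c1)).comp (bigPsi p a I))
    (by
      intro f hf
      have hle : SIdl ↥I (pRes p (fun i => Nat.gcd (a i) (p i)) I) (cRes c0 I) (cRes c1 I)
          ≤ RingHom.ker ((Ideal.Quotient.mkₐ ℂ (SIdl (Fin n) p c0 c1)).comp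
            (bigPsi p a I)).toRingHom := by
        rw [SIdl, Ideal.span_le]
        rintro g ⟨i, rfl⟩
        rw [SetLike.mem_coe, RingHom.mem_ker]
        show Ideal.Quotient.mkₐ ℂ (SIdl (Fin n) p c0 c1) (bigPsi p a I _) = 0
        rw [bigPsi_gen]
        exact Ideal.Quotient.eq_zero_iff_mem.mpr (sgen_mem p c0 c1)
      exact hle hf)

lemma bigpsi_mk (f' : SPoly ↥I) :
    bigpsi p c0 c1 a I (Ideal.Quotient.mk _ f') =
      Ideal.Quotient.mk (SIdl (Fin n) p c0 c1) (bigPsi p a I f') := rfl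

/-- Membership in `SCompA` unfolded. -/
lemma mem_SCompA_iff' {ι : Type} [Fintype ι] [DecidableEq ι] (P : ι → ℕ) (C0 C1 : ι → ℂ)
    (y : LGroup ι P) (w : SAlg ι P C0 C1) :
    w ∈ SCompA P C0 C1 y ↔ ∃ f ∈ polyCompA P y, Ideal.Quotient.mk (SIdl ι P C0 C1) f = w := by
  constructor
  · rintro ⟨f, hf, rfl⟩; exact ⟨f, hf, rfl⟩
  · rintro ⟨f, hf, rfl⟩; exact ⟨f, hf, rfl⟩

end Psi2
section Main
set_option linter.unusedSectionVars false
variable {n : ℕ} (p : Fin n → ℕ) (c0 c1 : Fin n → ℂ) (a : Fin n → ℕ) (I : Finset (Fin n))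

lemma bigPsi_red (hp : ∀ i, 0 < p i) {f' : SPoly ↥I}
    (hf' : f' ∈ RedSub (pRes p (fun i => Nat.gcd (a i) (p i)) I)) :
    bigPsi p a I f' ∈ RedSub p := by
  intro u hu i
  obtain ⟨m, hm, rfl⟩ := coeff_bigPsi_ne p a I f' u hu
  by_cases h : i ∈ I
  · rw [show (Sum.inl i : Fin n ⊕ Fin 2) = Sum.inl ((⟨i, h⟩ : ↥I) : Fin n) from rfl,
      Dexp_inl_mem]
    have hlt := hf' m hm ⟨i, h⟩
    have hmul := Nat.mul_lt_mul_left (Nat.gcd_pos_of_pos_right (a i) (hp i)) |>.mpr hlt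
    have hpd : Nat.gcd (a i) (p i) * pRes p (fun i => Nat.gcd (a i) (p i)) I ⟨i, h⟩ = p i :=
      Nat.mul_div_cancel' (Nat.gcd_dvd_right _ _)
    rw [hpd] at hmul
    exact hmul
  · rw [Dexp_inl_not p a I m h]
    exact hp i

lemma bigpsi_inj (hp : ∀ i, 0 < p i) : Function.Injective (bigpsi p c0 c1 a I) := by
  rw [injective_iff_map_eq_zero]
  intro w' h0
  obtain ⟨g, rfl⟩ := Ideal.Quotient.mk_surjective w'
  set P' := pRes p (fun i => Nat.gcd (a i) (p i)) I with hP'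
  have hp' : ∀ i, 0 < P' i := pRes_pos p a I hp
  set f' := Nmap P' (cRes c0 I) (cRes c1 I) g with hf'def
  have hmk : Ideal.Quotient.mk (SIdl ↥I P' (cRes c0 I) (cRes c1 I)) f' =
      Ideal.Quotient.mk _ g := mk_Nmap _ _ _ g
  rw [← hmk] at h0 ⊢
  rw [bigpsi_mk] at h0
  have hmem : bigPsi p a I f' ∈ SIdl (Fin n) p c0 c1 := Ideal.Quotient.eq_zero_iff_mem.mp h0
  have hzero : bigPsi p a I f' = 0 := by
    have hred : bigPsi p a I f' ∈ RedSub p :=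
      bigPsi_red p a I hp (Nmap_mem_red P' (cRes c0 I) (cRes c1 I) hp' g)
    rw [← Nmap_of_red p c0 c1 hred]
    exact Nmap_ideal p c0 c1 hp hmem
  have : f' = 0 := by
    ext m₀
    rw [← coeff_bigPsi_D p a I hp f' m₀, hzero]
    simp
  rw [this, map_zero]

lemma bigpsi_mem_comp (hp : ∀ i, 0 < p i) (hI : ∀ i, i ∈ I ↔ a i ≠ 0) (aZ k : ℤ)
    {w' : SAlg ↥I (pRes p (fun i => Nat.gcd (a i) (p i)) I) (cRes c0 I) (cRes c1 I)}
    (hw' : w' ∈ SCompA (pRes p (fun i => Nat.gcd (a i) (p i)) I) (cRes c0 I) (cRes c1 I)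
      (k • ((∑ i : ↥I, (a i.1 / Nat.gcd (a i.1) (p i.1)) •
          egen (pRes p (fun i => Nat.gcd (a i) (p i)) I) i) +
        aZ • cgen (pRes p (fun i => Nat.gcd (a i) (p i)) I)))) :
    bigpsi p c0 c1 a I w' ∈ SCompA p c0 c1 (k • ((∑ i, a i • egen p i) + aZ • cgen p)) := by
  rw [mem_SCompA_iff'] at hw'
  obtain ⟨f', hf', rfl⟩ := hw'
  rw [bigpsi_mk, mem_SCompA_iff']
  refine ⟨bigPsi p a I f', ?_, rfl⟩
  intro u hu
  obtain ⟨m, hm, rfl⟩ := coeff_bigPsi_ne p a I f' u hu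
  exact wt_push p a I hp hI aZ k m (hf' m hm)

lemma bigpsi_comp_pull (hp : ∀ i, 0 < p i) (hI : ∀ i, i ∈ I ↔ a i ≠ 0) (aZ k : ℤ)
    {w' : SAlg ↥I (pRes p (fun i => Nat.gcd (a i) (p i)) I) (cRes c0 I) (cRes c1 I)}
    (hw : bigpsi p c0 c1 a I w' ∈ SCompA p c0 c1
      (k • ((∑ i, a i • egen p i) + aZ • cgen p))) :
    w' ∈ SCompA (pRes p (fun i => Nat.gcd (a i) (p i)) I) (cRes c0 I) (cRes c1 I)
      (k • ((∑ i : ↥I, (a i.1 / Nat.gcd (a i.1) (p i.1)) •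
          egen (pRes p (fun i => Nat.gcd (a i) (p i)) I) i) +
        aZ • cgen (pRes p (fun i => Nat.gcd (a i) (p i)) I))) := by
  obtain ⟨g, rfl⟩ := Ideal.Quotient.mk_surjective w'
  set P' := pRes p (fun i => Nat.gcd (a i) (p i)) I with hP'
  have hp' : ∀ i, 0 < P' i := pRes_pos p a I hp
  set f' := Nmap P' (cRes c0 I) (cRes c1 I) g with hf'def
  have hf'red : f' ∈ RedSub P' := Nmap_mem_red P' (cRes c0 I) (cRes c1 I) hp' g
  have hmk : Ideal.Quotient.mk (SIdl ↥I P' (cRes c0 I) (cRes c1 I)) f' =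
      Ideal.Quotient.mk _ g := mk_Nmap _ _ _ g
  rw [← hmk] at hw ⊢
  rw [bigpsi_mk] at hw
  rw [mem_SCompA_iff p c0 c1 hp] at hw
  obtain ⟨h, hcomp, hred, heq⟩ := hw
  have hPsired : bigPsi p a I f' ∈ RedSub p := bigPsi_red p a I hp hf'red
  have hPsieq : h = bigPsi p a I f' := by
    have := (mk_eq_iff_Nmap_eq p c0 c1 hp h (bigPsi p a I f')).mp heq
    rwa [Nmap_of_red p c0 c1 hred, Nmap_of_red p c0 c1 hPsired] at this
  rw [hPsieq] at hcomp
  rw [mem_SCompA_iff']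
  refine ⟨f', ?_, rfl⟩
  intro m' hm'
  have hc : coeff (Dexp p a I m') (bigPsi p a I f') ≠ 0 := by
    rw [coeff_bigPsi_D p a I hp]; exact hm'
  exact wt_pull_D p a I hp hI aZ k m' (hcomp _ hc)

lemma bigpsi_comp_surj (hp : ∀ i, 0 < p i) (hI : ∀ i, i ∈ I ↔ a i ≠ 0) (aZ k : ℤ)
    {w : SAlg (Fin n) p c0 c1}
    (hw : w ∈ SCompA p c0 c1 (k • ((∑ i, a i • egen p i) + aZ • cgen p))) :
    ∃ w', w' ∈ SCompA (pRes p (fun i => Nat.gcd (a i) (p i)) I) (cRes c0 I) (cRes c1 I)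
      (k • ((∑ i : ↥I, (a i.1 / Nat.gcd (a i.1) (p i.1)) •
          egen (pRes p (fun i => Nat.gcd (a i) (p i)) I) i) +
        aZ • cgen (pRes p (fun i => Nat.gcd (a i) (p i)) I)))
      ∧ bigpsi p c0 c1 a I w' = w := by
  rw [mem_SCompA_iff p c0 c1 hp] at hw
  obtain ⟨f, hfcomp, hfred, rfl⟩ := hw
  have hDE : ∀ m ∈ f.support, Dexp p a I (Eexp p a I m) = m := by
    intro m hm
    exact (wt_pull_red p a I hp hI aZ k m (fun i => hfred m (mem_support_iff.mp hm) i)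
      (hfcomp m (mem_support_iff.mp hm))).1
  set f'' : SPoly ↥I := ∑ m ∈ f.support, monomial (Eexp p a I m) (coeff m f) with hf''
  have hPsi : bigPsi p a I f'' = f := by
    rw [hf'', map_sum]
    conv_rhs => rw [f.as_sum]
    refine Finset.sum_congr rfl fun m hm => ?_
    rw [bigPsi_monomial, hDE m hm]
  refine ⟨Ideal.Quotient.mk _ f'', ?_, by rw [bigpsi_mk, hPsi]⟩
  rw [mem_SCompA_iff']
  refine ⟨f'', ?_, rfl⟩
  intro u hu
  rw [hf'', show coeff u (∑ m ∈ f.support, monomial (Eexp p a I m) (coeff m f))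
    = ∑ m ∈ f.support, coeff u (monomial (Eexp p a I m) (coeff m f)) from coeff_sum _ _ _] at hu
  obtain ⟨m, hm, hne⟩ := Finset.exists_ne_zero_of_sum_ne_zero hu
  have hu' : u = Eexp p a I m := by
    rw [coeff_monomial] at hne
    by_contra hcon
    exact hne (if_neg fun hh => hcon hh.symm)
  subst hu'
  refine wt_pull_D p a I hp hI aZ k (Eexp p a I m) ?_
  rw [hDE m hm]
  exact hfcomp m (mem_support_iff.mp hm)

end Main
/-- For a non-torsion `x` with normal form `x = ∑ aᵢeᵢ + a·c`, setting
`I := {i : aᵢ ≠ 0}`, `dᵢ := gcd(aᵢ,pᵢ)`, `p′ᵢ := pᵢ/dᵢ` and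
`x′ := ∑_{i∈I} (aᵢ/dᵢ)e′ᵢ + a·c′`, there is an isomorphism of `ℤ`-graded `ℂ`-algebras
`S^x ≅ (S′)^{x′}`. -/
theorem veronese_change_of_parameters_iso (n : ℕ) (hn : 1 ≤ n) (p : Fin n → ℕ)
    (hp : ∀ i, 2 ≤ p i)
    (c0 c1 : Fin n → ℂ) (hnz : ∀ i, (c0 i, c1 i) ≠ (0, 0))
    (hdist : ∀ i j : Fin n, i ≠ j → c0 i * c1 j ≠ c1 i * c0 j)
    (x : LGroup (Fin n) p) (hx : ∀ m : ℤ, m ≠ 0 → m • x ≠ 0)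
    (a : Fin n → ℕ) (ha : ∀ i, a i < p i) (aZ : ℤ)
    (hxnf : x = (∑ i, a i • egen p i) + aZ • cgen p)
    (R : Subalgebra ℂ (SAlg (Fin n) p c0 c1))
    (hR : Subalgebra.toSubmodule R = SVerA p c0 c1 x)
    (R' : Subalgebra ℂ (SAlg ↥(Finset.univ.filter (fun i => a i ≠ 0))
        (pRes p (fun i => Nat.gcd (a i) (p i)) (Finset.univ.filter (fun i => a i ≠ 0)))
        (cRes c0 (Finset.univ.filter (fun i => a i ≠ 0)))
        (cRes c1 (Finset.univ.filter (fun i => a i ≠ 0)))))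
    (hR' : Subalgebra.toSubmodule R' =
      SVerA (pRes p (fun i => Nat.gcd (a i) (p i)) (Finset.univ.filter (fun i => a i ≠ 0)))
        (cRes c0 (Finset.univ.filter (fun i => a i ≠ 0)))
        (cRes c1 (Finset.univ.filter (fun i => a i ≠ 0)))
        ((∑ i : ↥(Finset.univ.filter (fun i => a i ≠ 0)),
            (a i.1 / Nat.gcd (a i.1) (p i.1)) •
              egen (pRes p (fun i => Nat.gcd (a i) (p i))
                (Finset.univ.filter (fun i => a i ≠ 0))) i) +
          aZ • cgen (pRes p (fun i => Nat.gcd (a i) (p i))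
            (Finset.univ.filter (fun i => a i ≠ 0))))) :
    ∃ φ : ↥R ≃ₐ[ℂ] ↥R',
      ∀ (k : ℤ) (w : ↥R),
        (w : SAlg (Fin n) p c0 c1) ∈ SCompA p c0 c1 (k • x) ↔
          ((φ w : ↥R') : SAlg ↥(Finset.univ.filter (fun i => a i ≠ 0))
              (pRes p (fun i => Nat.gcd (a i) (p i)) (Finset.univ.filter (fun i => a i ≠ 0)))
              (cRes c0 (Finset.univ.filter (fun i => a i ≠ 0)))
              (cRes c1 (Finset.univ.filter (fun i => a i ≠ 0)))) ∈
            SCompA (pRes p (fun i => Nat.gcd (a i) (p i))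
                (Finset.univ.filter (fun i => a i ≠ 0)))
              (cRes c0 (Finset.univ.filter (fun i => a i ≠ 0)))
              (cRes c1 (Finset.univ.filter (fun i => a i ≠ 0)))
              (k • ((∑ i : ↥(Finset.univ.filter (fun i => a i ≠ 0)),
                  (a i.1 / Nat.gcd (a i.1) (p i.1)) •
                    egen (pRes p (fun i => Nat.gcd (a i) (p i))
                      (Finset.univ.filter (fun i => a i ≠ 0))) i) +
                aZ • cgen (pRes p (fun i => Nat.gcd (a i) (p i))
                  (Finset.univ.filter (fun i => a i ≠ 0))))) := by
  classical
  have hI : ∀ i, i ∈ (Finset.univ.filter (fun i => a i ≠ 0)) ↔ a i ≠ 0 := by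
    intro i; simp
  have hp1 : ∀ i, 0 < p i := fun i => lt_of_lt_of_le two_pos (hp i)
  have hcompmap : ∀ k : ℤ,
      Submodule.map (bigpsi p c0 c1 a (Finset.univ.filter (fun i => a i ≠ 0))).toLinearMap
        (SCompA (pRes p (fun i => Nat.gcd (a i) (p i)) (Finset.univ.filter (fun i => a i ≠ 0))) (cRes c0 (Finset.univ.filter (fun i => a i ≠ 0))) (cRes c1 (Finset.univ.filter (fun i => a i ≠ 0))) (k • ((∑ i : ↥(Finset.univ.filter (fun i => a i ≠ 0)), (a i.1 / Nat.gcd (a i.1) (p i.1)) • egen (pRes p (fun i => Nat.gcd (a i) (p i)) (Finset.univ.filter (fun i => a i ≠ 0))) i) + aZ • cgen (pRes p (fun i => Nat.gcd (a i) (p i)) (Finset.univ.filter (fun i => a i ≠ 0)))))) =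
      SCompA p c0 c1 (k • x) := by
    intro k
    apply le_antisymm
    · rintro w ⟨w', hw', rfl⟩
      rw [hxnf]
      exact bigpsi_mem_comp p c0 c1 a (Finset.univ.filter (fun i => a i ≠ 0)) hp1 hI aZ k hw'
    · intro w hw
      rw [hxnf] at hw
      obtain ⟨w', hw', heq⟩ := bigpsi_comp_surj p c0 c1 a (Finset.univ.filter (fun i => a i ≠ 0)) hp1 hI aZ k hw
      exact ⟨w', hw', heq⟩
  have hver : Submodule.map (bigpsi p c0 c1 a (Finset.univ.filter (fun i => a i ≠ 0))).toLinearMap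
      (SVerA (pRes p (fun i => Nat.gcd (a i) (p i)) (Finset.univ.filter (fun i => a i ≠ 0))) (cRes c0 (Finset.univ.filter (fun i => a i ≠ 0))) (cRes c1 (Finset.univ.filter (fun i => a i ≠ 0))) ((∑ i : ↥(Finset.univ.filter (fun i => a i ≠ 0)), (a i.1 / Nat.gcd (a i.1) (p i.1)) • egen (pRes p (fun i => Nat.gcd (a i) (p i)) (Finset.univ.filter (fun i => a i ≠ 0))) i) + aZ • cgen (pRes p (fun i => Nat.gcd (a i) (p i)) (Finset.univ.filter (fun i => a i ≠ 0))))) =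
      SVerA p c0 c1 x := by
    rw [SVerA, SVerA, Submodule.map_iSup]
    exact iSup_congr hcompmap
  have hRR' : ∀ v', v' ∈ R' → bigpsi p c0 c1 a (Finset.univ.filter (fun i => a i ≠ 0)) v' ∈ R := by
    intro v' hv'
    have h1 : v' ∈ Subalgebra.toSubmodule R' := hv'
    rw [hR'] at h1
    have h2 : bigpsi p c0 c1 a (Finset.univ.filter (fun i => a i ≠ 0)) v' ∈ Submodule.map (bigpsi p c0 c1 a (Finset.univ.filter (fun i => a i ≠ 0))).toLinearMap
        (SVerA (pRes p (fun i => Nat.gcd (a i) (p i)) (Finset.univ.filter (fun i => a i ≠ 0))) (cRes c0 (Finset.univ.filter (fun i => a i ≠ 0))) (cRes c1 (Finset.univ.filter (fun i => a i ≠ 0))) ((∑ i : ↥(Finset.univ.filter (fun i => a i ≠ 0)), (a i.1 / Nat.gcd (a i.1) (p i.1)) • egen (pRes p (fun i => Nat.gcd (a i) (p i)) (Finset.univ.filter (fun i => a i ≠ 0))) i) + aZ • cgen (pRes p (fun i => Nat.gcd (a i) (p i)) (Finset.univ.filter (fun i => a i ≠ 0))))) :=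
      ⟨v', h1, rfl⟩
    rw [hver] at h2
    have h3 : bigpsi p c0 c1 a (Finset.univ.filter (fun i => a i ≠ 0)) v' ∈ Subalgebra.toSubmodule R := by rw [hR]; exact h2
    exact h3
  have hψRmem : ∀ v' : ↥R', ((bigpsi p c0 c1 a (Finset.univ.filter (fun i => a i ≠ 0))).comp R'.val) v' ∈ R :=
    fun v' => hRR' v'.1 v'.2
  have hbij : Function.Bijective
      (AlgHom.codRestrict ((bigpsi p c0 c1 a (Finset.univ.filter (fun i => a i ≠ 0))).comp R'.val) R hψRmem) := by
    constructor
    · intro u v huv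
      apply Subtype.ext
      apply bigpsi_inj p c0 c1 a (Finset.univ.filter (fun i => a i ≠ 0)) hp1
      exact congrArg Subtype.val huv
    · intro w
      have h1 : (w : SAlg (Fin n) p c0 c1) ∈ Subalgebra.toSubmodule R := w.2
      rw [hR, ← hver] at h1
      obtain ⟨v', hv', heq⟩ := h1
      have hv'R : v' ∈ R' := by
        have : v' ∈ Subalgebra.toSubmodule R' := by rw [hR']; exact hv'
        exact this
      exact ⟨⟨v', hv'R⟩, Subtype.ext heq⟩
  refine ⟨(AlgEquiv.ofBijective _ hbij).symm, ?_⟩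
  · intro k w
    have hψφ : bigpsi p c0 c1 a (Finset.univ.filter (fun i => a i ≠ 0)) (((AlgEquiv.ofBijective
        (AlgHom.codRestrict ((bigpsi p c0 c1 a (Finset.univ.filter (fun i => a i ≠ 0))).comp R'.val) R hψRmem) hbij).symm w : ↥R') :
        SAlg ↥(Finset.univ.filter (fun i => a i ≠ 0)) (pRes p (fun i => Nat.gcd (a i) (p i)) (Finset.univ.filter (fun i => a i ≠ 0))) (cRes c0 (Finset.univ.filter (fun i => a i ≠ 0))) (cRes c1 (Finset.univ.filter (fun i => a i ≠ 0)))) =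
        (w : SAlg (Fin n) p c0 c1) := by
      have h0 := (AlgEquiv.ofBijective
        (AlgHom.codRestrict ((bigpsi p c0 c1 a (Finset.univ.filter (fun i => a i ≠ 0))).comp R'.val) R hψRmem) hbij).apply_symm_apply w
      exact congrArg Subtype.val h0
    constructor
    · intro hw
      rw [← hψφ, hxnf] at hw
      exact bigpsi_comp_pull p c0 c1 a (Finset.univ.filter (fun i => a i ≠ 0)) hp1 hI aZ k hw
    · intro hw'
      rw [← hψφ, hxnf]
      exact bigpsi_mem_comp p c0 c1 a (Finset.univ.filter (fun i => a i ≠ 0)) hp1 hI aZ k hw'
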